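/- Let α > 0, ω ≥ 1, let â ∈ ℝ^d be a unit vector, and let X, Y be symmetric d×d real matrices such that for all z, z' ∈ ℝ^d, ⟨Xz, z⟩ − ⟨Yz', z'⟩ ≤ (2/α)(‖z−z'‖² − (2ω/(1+ω))⟨â, z−z'⟩²). Then trace(X − Y) ≤ −8(ω−1)/(α(ω+1)). -/

import Mathlib

open Matrix RealInnerProductSpace

lemma symm_swap {d : ℕ} (M : Matrix (Fin d) (Fin d) ℝ) (hM : M.IsSymm) (u v : Fin d → ℝ) :
    M.mulVec u ⬝ᵥ v = M.mulVec v ⬝ᵥ u := by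
  rw [dotProduct_comm, dotProduct_mulVec, ← mulVec_transpose, hM]

lemma diag_sum {d : ℕ} (M : Matrix (Fin d) (Fin d) ℝ) :
    ∑ i, M.mulVec (Pi.single i 1) ⬝ᵥ Pi.single i 1 = M.trace := by
  have : ∀ i : Fin d, M.mulVec (Pi.single i 1) ⬝ᵥ Pi.single i 1 = M i i := by
    intro i; rw [mulVec_single]; simp [dotProduct_single]
  simp only [this]
  simp [Matrix.trace, Matrix.diag]

lemma refl_sum {d : ℕ} (M : Matrix (Fin d) (Fin d) ℝ) (hM : M.IsSymm) (a : Fin d → ℝ)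
    (h1 : ∑ i, a i * a i = 1) :
    ∑ i, M.mulVec (Pi.single i 1 - (2 * a i) • a) ⬝ᵥ (Pi.single i 1 - (2 * a i) • a)
      = M.trace := by
  have key : ∀ i : Fin d, M.mulVec (Pi.single i 1 - (2 * a i) • a) ⬝ᵥ (Pi.single i 1 - (2 * a i) • a)
      = M i i - 4 * (a i * M.mulVec a i) + 4 * (a i * a i) * (M.mulVec a ⬝ᵥ a) := by
    intro i
    have e1 : M.mulVec (Pi.single i 1) ⬝ᵥ Pi.single i 1 = M i i := by
      rw [mulVec_single]; simp [dotProduct_single]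
    have e3 : M.mulVec ((2 * a i) • a) ⬝ᵥ Pi.single i 1 = 2 * a i * (M.mulVec a i) := by
      rw [mulVec_smul, smul_dotProduct, dotProduct_single]; simp [smul_eq_mul]
    have e2 : M.mulVec (Pi.single i 1) ⬝ᵥ ((2 * a i) • a) = 2 * a i * (M.mulVec a i) := by
      rw [symm_swap M hM, e3]
    have e4 : M.mulVec ((2 * a i) • a) ⬝ᵥ ((2 * a i) • a)
        = (2 * a i) * (2 * a i) * (M.mulVec a ⬝ᵥ a) := by
      rw [mulVec_smul, smul_dotProduct, dotProduct_smul]; simp [smul_eq_mul]; ring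
    rw [mulVec_sub, sub_dotProduct, dotProduct_sub, dotProduct_sub, e1, e2, e3, e4]; ring
  have hK : ∑ i, a i * M.mulVec a i = M.mulVec a ⬝ᵥ a := by
    rw [dotProduct_comm]; rfl
  simp only [key]
  rw [Finset.sum_add_distrib, Finset.sum_sub_distrib, ← Finset.mul_sum, hK]
  have h2 : (∑ i : Fin d, 4 * (a i * a i) * (M.mulVec a ⬝ᵥ a))
      = 4 * (M.mulVec a ⬝ᵥ a) := by
    rw [← Finset.sum_mul, ← Finset.mul_sum, h1]; ring
  rw [h2]
  have hdiag : ∑ i : Fin d, M i i = M.trace := by simp [Matrix.trace, Matrix.diag]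
  rw [hdiag]; ring

/-- **Trace estimate from the matrix inequality with `Z^{α/2} = (2/α)(I − (2ω/(1+ω)) â⊗â)`.**
If `α > 0`, `ω ≥ 1`, `â` is a unit vector, and symmetric matrices `X, Y` satisfy
`⟨Xz, z⟩ − ⟨Yz', z'⟩ ≤ (2/α)(‖z−z'‖² − (2ω/(1+ω))⟨â, z−z'⟩²)` for all `z, z'`,
then `trace(X − Y) ≤ −8(ω−1)/(α(ω+1))`. -/
theorem trace_estimate_from_matrix_inequality {d : ℕ}
    (α ω : ℝ) (hα : 0 < α) (hω : 1 ≤ ω)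
    (a_hat : EuclideanSpace ℝ (Fin d)) (ha : ‖a_hat‖ = 1)
    (X Y : Matrix (Fin d) (Fin d) ℝ) (hX : X.IsSymm) (hY : Y.IsSymm)
    (h : ∀ z z' : EuclideanSpace ℝ (Fin d),
      X.mulVec z ⬝ᵥ z - Y.mulVec z' ⬝ᵥ z'
        ≤ (2 / α) * (‖z - z'‖ ^ 2 - (2 * ω / (1 + ω)) * ⟪a_hat, z - z'⟫ ^ 2)) :
    (X - Y).trace ≤ -(8 * (ω - 1)) / (α * (ω + 1)) := by
  classical
  have hω1 : (0:ℝ) < 1 + ω := by linarith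
  set a : Fin d → ℝ := fun j => a_hat j with hadef
  have hsum : ∑ i, a i * a i = 1 := by
    have h2 : ⟪a_hat, a_hat⟫ = 1 := by rw [real_inner_self_eq_norm_sq, ha]; norm_num
    rw [PiLp.inner_apply] at h2
    simpa [hadef, sq] using h2
  set q : ℝ := 2 * ω / (1 + ω) with hqdef
  -- transfer the hypothesis to plain vectors
  have h' : ∀ z z' : Fin d → ℝ,
      X.mulVec z ⬝ᵥ z - Y.mulVec z' ⬝ᵥ z'
        ≤ (2 / α) * ((z - z') ⬝ᵥ (z - z') - q * (a ⬝ᵥ (z - z')) ^ 2) := by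
    intro z z'
    have H := h ((WithLp.equiv 2 _).symm z) ((WithLp.equiv 2 _).symm z')
    have hsub : (WithLp.equiv 2 (Fin d → ℝ)).symm z - (WithLp.equiv 2 (Fin d → ℝ)).symm z'
        = (WithLp.equiv 2 (Fin d → ℝ)).symm (z - z') := by
      simp
    have hnorm : ‖(WithLp.equiv 2 (Fin d → ℝ)).symm (z - z')‖ ^ 2
        = (z - z') ⬝ᵥ (z - z') := by
      rw [← real_inner_self_eq_norm_sq, PiLp.inner_apply]
      simp [dotProduct]
      exact Finset.sum_congr rfl (fun i _ => sq _)
    have hinner : ⟪a_hat, (WithLp.equiv 2 (Fin d → ℝ)).symm (z - z')⟫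
        = a ⬝ᵥ (z - z') := by
      rw [PiLp.inner_apply]
      simp [dotProduct, hadef]
      exact Finset.sum_congr rfl (fun i _ => mul_comm _ _)
    rw [hsub, hnorm, hinner] at H
    exact H
  -- the two test vectors for each coordinate
  set u : Fin d → (Fin d → ℝ) := fun i => Pi.single i 1 with hudef
  set w : Fin d → (Fin d → ℝ) := fun i => Pi.single i 1 - (2 * a i) • a with hwdef
  have huw : ∀ i, u i - w i = (2 * a i) • a := by
    intro i; simp [hudef, hwdef]
  have hwu : ∀ i, w i - u i = -((2 * a i) • a) := by
    intro i; simp [hudef, hwdef]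
  have hRHS : ∀ i : Fin d,
      (2 / α) * (((2 * a i) • a) ⬝ᵥ ((2 * a i) • a) - q * (a ⬝ᵥ ((2 * a i) • a)) ^ 2)
        = (2 / α) * (4 * (a i * a i) * (1 - q)) := by
    intro i
    have h1 : ((2 * a i) • a) ⬝ᵥ ((2 * a i) • a) = 4 * (a i * a i) := by
      rw [smul_dotProduct, dotProduct_smul]
      have : a ⬝ᵥ a = 1 := by simpa [dotProduct] using hsum
      simp [smul_eq_mul, this]; ring
    have h2 : a ⬝ᵥ ((2 * a i) • a) = 2 * a i := by
      rw [dotProduct_smul]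
      have : a ⬝ᵥ a = 1 := by simpa [dotProduct] using hsum
      simp [smul_eq_mul, this]
    rw [h1, h2]; ring
  have key : ∀ i : Fin d,
      (X.mulVec (u i) ⬝ᵥ u i - Y.mulVec (w i) ⬝ᵥ w i)
      + (X.mulVec (w i) ⬝ᵥ w i - Y.mulVec (u i) ⬝ᵥ u i)
        ≤ 2 * ((2 / α) * (4 * (a i * a i) * (1 - q))) := by
    intro i
    have A := h' (u i) (w i)
    have B := h' (w i) (u i)
    rw [huw i, hRHS i] at A
    rw [hwu i] at B
    have hBr : (2 / α) * ((-((2 * a i) • a)) ⬝ᵥ (-((2 * a i) • a))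
        - q * (a ⬝ᵥ (-((2 * a i) • a))) ^ 2)
        = (2 / α) * (4 * (a i * a i) * (1 - q)) := by
      rw [neg_dotProduct, dotProduct_neg, neg_neg, dotProduct_neg, neg_sq, hRHS i]
    rw [hBr] at B
    linarith
  -- sum up
  have hsumineq := Finset.sum_le_sum (fun i (_ : i ∈ Finset.univ) => key i)
  have hXu := diag_sum X
  have hYu := diag_sum Y
  have hXw := refl_sum X hX a hsum
  have hYw := refl_sum Y hY a hsum
  have hL : ∑ i : Fin d, ((X.mulVec (u i) ⬝ᵥ u i - Y.mulVec (w i) ⬝ᵥ w i)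
      + (X.mulVec (w i) ⬝ᵥ w i - Y.mulVec (u i) ⬝ᵥ u i))
      = 2 * (X.trace - Y.trace) := by
    rw [Finset.sum_add_distrib, Finset.sum_sub_distrib, Finset.sum_sub_distrib]
    rw [hudef, hwdef] at *
    rw [hXu, hYu, hXw, hYw]; ring
  have hR : ∑ i : Fin d, 2 * ((2 / α) * (4 * (a i * a i) * (1 - q)))
      = (16 / α) * (1 - q) := by
    rw [← Finset.mul_sum]
    have : ∑ i : Fin d, (2 / α) * (4 * (a i * a i) * (1 - q))
        = (2 / α) * (4 * (1 - q)) := by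
      rw [← Finset.mul_sum]
      congr 1
      rw [← Finset.sum_mul, ← Finset.mul_sum, hsum]; ring
    rw [this]; ring
  rw [hL, hR] at hsumineq
  have htr : (X - Y).trace = X.trace - Y.trace := by rw [Matrix.trace_sub]
  rw [htr]
  have hfinal : (16 / α) * (1 - q) = 2 * (-(8 * (ω - 1)) / (α * (ω + 1))) := by
    rw [hqdef]
    field_simp
    ring
  rw [hfinal] at hsumineq
  linarith
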